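/- Suppose ρ is E-constant on ℬ' \ ℬ⁻ (i.e., for every σ ∈ ℬ' \ ℬ⁻ and every additive λ, |(ρλ)(σ) − (ρ∗λ)(σ)| < |λ(σ)|/E), ‖ρ‖_{L¹}, ‖λ‖_{L¹} ≤ B, and ℬ ⪯ ℬ'. Then for any C > 0, Σ over σ ∈ ℬ with |δ_λ(σ)| ≤ C of |(ρλ)(σ) − (ρ∗λ)(σ)| is less than 2B/E + C·|ρ|(𝔇_{E,ℬ,λ}(ℬ') ∪ ℬ⁻) + |ρλ|(𝔇_{E,ℬ,λ}(ℬ') ∪ ℬ⁻). -/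

import Mathlib

open scoped Classical

/-- An additive function on a Boolean algebra. -/
def IsAdditive {α : Type*} [BooleanAlgebra α] (ν : α → ℝ) : Prop :=
  ν ⊥ = 0 ∧ ∀ σ τ : α, ν (σ ⊔ τ) = ν σ + ν τ - ν (σ ⊓ τ)

/-- A partition: a finite set of pairwise disjoint elements. -/
def IsPartition {α : Type*} [BooleanAlgebra α] (A : Finset α) : Prop :=
  ∀ σ ∈ A, ∀ τ ∈ A, σ ≠ τ → σ ⊓ τ = ⊥

/-- `Refines A B` means `B` refines `A`. -/
def Refines {α : Type*} [BooleanAlgebra α] (A B : Finset α) : Prop :=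
  B.sup id = A.sup id ∧ ∀ σ ∈ B, ∃ τ ∈ A, σ ≤ τ

lemma additive_sum {α : Type*} [BooleanAlgebra α] [DecidableEq α] {ν : α → ℝ}
    (hν : IsAdditive ν) {S : Finset α} (hS : IsPartition S) :
    ν (S.sup id) = ∑ τ ∈ S, ν τ := by
  induction S using Finset.induction_on with
  | empty => simpa using hν.1
  | @insert a s ha ih =>
    have hs : IsPartition s := fun x hx y hy hxy =>
      hS x (Finset.mem_insert_of_mem hx) y (Finset.mem_insert_of_mem hy) hxy
    have hdisj : a ⊓ s.sup id = ⊥ := by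
      rw [Finset.sup_inf_distrib_left, Finset.sup_eq_bot_iff]
      intro t ht
      exact hS a (Finset.mem_insert_self a s) t (Finset.mem_insert_of_mem ht)
        (fun h => ha (h ▸ ht))
    rw [Finset.sup_insert, Finset.sum_insert ha, hν.2]
    simp only [id] at hdisj ⊢
    rw [hdisj, hν.1, ih hs]
    ring

theorem e_constant_refinement {α : Type*} [BooleanAlgebra α] [DecidableEq α]
    (μ ρ lam pl : α → ℝ)
    (hμadd : IsAdditive μ) (hμ01 : ∀ σ, 0 ≤ μ σ ∧ μ σ ≤ 1) (hμtop : μ ⊤ = 1)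
    (hρadd : IsAdditive ρ) (hlamadd : IsAdditive lam) (hpladd : IsAdditive pl)
    (Bbd E C : ℝ) (hBbd : 0 < Bbd) (hE : 0 < E) (hC : 0 < C)
    (hρbd : ∀ A : Finset α, IsPartition A → (∑ σ ∈ A, |ρ σ|) ≤ Bbd)
    (hlambd : ∀ A : Finset α, IsPartition A → (∑ σ ∈ A, |lam σ|) ≤ Bbd)
    (B B' Bm : Finset α) (hB : IsPartition B) (hB' : IsPartition B')
    (href : Refines B B') (hBm : Bm ⊆ B')
    (hμposB : ∀ σ ∈ B, 0 < μ σ) (hμposB' : ∀ σ ∈ B', 0 < μ σ)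
    (hconst : ∀ σ ∈ B', σ ∉ Bm → |pl σ - ρ σ * lam σ / μ σ| < |lam σ| / E) :
    (∑ σ ∈ B.filter (fun σ => |lam σ / μ σ| ≤ C), |pl σ - ρ σ * lam σ / μ σ|)
      < 2 * Bbd / E
        + C * (∑ τ ∈ (B'.filter (fun τ =>
            ∃ σ ∈ B, τ ≤ σ ∧ 1 / E ≤ |lam τ / μ τ - lam σ / μ σ|)) ∪ Bm, |ρ τ|)
        + (∑ τ ∈ (B'.filter (fun τ =>
            ∃ σ ∈ B, τ ≤ σ ∧ 1 / E ≤ |lam τ / μ τ - lam σ / μ σ|)) ∪ Bm, |pl τ|) := by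
  set Bad : Finset α := (B'.filter (fun τ =>
            ∃ σ ∈ B, τ ≤ σ ∧ 1 / E ≤ |lam τ / μ τ - lam σ / μ σ|)) ∪ Bm with hBaddef
  set F : Finset α := B.filter (fun σ => |lam σ / μ σ| ≤ C) with hFdef
  set T : α → Finset α := fun σ => B'.filter (fun τ => τ ≤ σ) with hTdef
  have hbotμ : μ ⊥ = 0 := hμadd.1
  have hne_bot : ∀ τ ∈ B', τ ≠ ⊥ := by
    intro τ hτ h
    have := hμposB' τ hτ
    rw [h, hbotμ] at this
    exact lt_irrefl 0 this
  have huniq : ∀ τ ∈ B', ∀ σ ∈ B, ∀ σ' ∈ B, τ ≤ σ → τ ≤ σ' → σ = σ' := by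
    intro τ hτ σ hσ σ' hσ' h1 h2
    by_contra hne
    have hle : τ ≤ σ ⊓ σ' := le_inf h1 h2
    rw [hB σ hσ σ' hσ' hne] at hle
    exact hne_bot τ hτ (le_bot_iff.mp hle)
  have hTsub : ∀ σ, T σ ⊆ B' := fun σ => Finset.filter_subset _ _
  have hTpart : ∀ σ, IsPartition (T σ) := fun σ x hx y hy hxy =>
    hB' x (hTsub σ hx) y (hTsub σ hy) hxy
  have hsupT : ∀ σ ∈ B, (T σ).sup id = σ := by
    intro σ hσ
    apply le_antisymm
    · exact Finset.sup_le fun τ hτ => (Finset.mem_filter.mp hτ).2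
    · have h1 : σ ≤ B'.sup id := by
        rw [href.1]; exact Finset.le_sup (f := id) hσ
      have h2 : σ = σ ⊓ B'.sup id := (inf_eq_left.mpr h1).symm
      nth_rewrite 1 [h2]
      rw [Finset.sup_inf_distrib_left]
      apply Finset.sup_le
      intro τ hτ
      by_cases hle : τ ≤ σ
      · exact le_trans inf_le_right
          (Finset.le_sup (f := id) (Finset.mem_filter.mpr ⟨hτ, hle⟩))
      · obtain ⟨σ', hσ', hτσ'⟩ := href.2 τ hτ
        have hne : σ ≠ σ' := fun h => hle (h ▸ hτσ')
        have hb : σ ⊓ id τ ≤ σ ⊓ σ' := inf_le_inf_left σ hτσ'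
        rw [hB σ hσ σ' hσ' hne] at hb
        exact hb.trans bot_le
  -- pairwise disjointness of subfamilies of the T σ over σ ∈ F
  have hFB : ∀ σ ∈ F, σ ∈ B := fun σ hσ => (Finset.mem_filter.mp hσ).1
  have hTdisj : ∀ S : α → Finset α, (∀ σ, S σ ⊆ T σ) →
      (↑F : Set α).PairwiseDisjoint S := by
    intro S hS x hx y hy hxy
    rw [Function.onFun, Finset.disjoint_left]
    intro a hax hay
    obtain ⟨haB', halex⟩ := Finset.mem_filter.mp (hS x hax)
    obtain ⟨_, haley⟩ := Finset.mem_filter.mp (hS y hay)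
    exact hxy (huniq a haB' x (hFB x (Finset.mem_coe.mp hx))
      y (hFB y (Finset.mem_coe.mp hy)) halex haley)
  -- per-term bound on good elements
  have good_bound : ∀ σ ∈ F, ∀ τ ∈ T σ \ Bad,
      |pl τ - ρ τ * (lam σ / μ σ)| < (|lam τ| + |ρ τ|) / E := by
    intro σ hσF τ hτ
    obtain ⟨hσ, hσC⟩ := Finset.mem_filter.mp hσF
    obtain ⟨hτT, hτnB⟩ := Finset.mem_sdiff.mp hτ
    obtain ⟨hτB', hτle⟩ := Finset.mem_filter.mp hτT
    have hτnBm : τ ∉ Bm := fun h => hτnB (Finset.mem_union_right _ h)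
    have hτnfil : |lam τ / μ τ - lam σ / μ σ| < 1 / E := by
      by_contra h
      push_neg at h
      exact hτnB (Finset.mem_union_left _ (Finset.mem_filter.mpr
        ⟨hτB', ⟨σ, hσ, hτle, h⟩⟩))
    have h1 := hconst τ hτB' hτnBm
    have heq : pl τ - ρ τ * (lam σ / μ σ)
        = (pl τ - ρ τ * lam τ / μ τ) + ρ τ * (lam τ / μ τ - lam σ / μ σ) := by
      ring
    have h2 : |ρ τ * (lam τ / μ τ - lam σ / μ σ)| ≤ |ρ τ| * (1 / E) := by
      rw [abs_mul]
      exact mul_le_mul_of_nonneg_left hτnfil.le (abs_nonneg _)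
    calc |pl τ - ρ τ * (lam σ / μ σ)|
        = |(pl τ - ρ τ * lam τ / μ τ) + ρ τ * (lam τ / μ τ - lam σ / μ σ)| := by
          rw [heq]
      _ ≤ |pl τ - ρ τ * lam τ / μ τ| + |ρ τ * (lam τ / μ τ - lam σ / μ σ)| :=
          abs_add_le _ _
      _ < |lam τ| / E + |ρ τ| * (1 / E) := add_lt_add_of_lt_of_le h1 h2
      _ = (|lam τ| + |ρ τ|) / E := by ring
  -- per-σ decomposition
  have key : ∀ σ ∈ F,
      |pl σ - ρ σ * lam σ / μ σ| ≤
        (∑ τ ∈ T σ \ Bad, |pl τ - ρ τ * (lam σ / μ σ)|)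
        + (∑ τ ∈ T σ ∩ Bad, (|pl τ| + C * |ρ τ|)) := by
    intro σ hσF
    obtain ⟨hσ, hσC⟩ := Finset.mem_filter.mp hσF
    have hpl := additive_sum hpladd (hTpart σ)
    rw [hsupT σ hσ] at hpl
    have hρ := additive_sum hρadd (hTpart σ)
    rw [hsupT σ hσ] at hρ
    have hsplit : pl σ - ρ σ * lam σ / μ σ
        = ∑ τ ∈ T σ, (pl τ - ρ τ * (lam σ / μ σ)) := by
      rw [Finset.sum_sub_distrib, ← Finset.sum_mul, ← hρ, ← hpl, mul_div_assoc]
    have hbadterm : ∀ τ ∈ T σ ∩ Bad,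
        |pl τ - ρ τ * (lam σ / μ σ)| ≤ |pl τ| + C * |ρ τ| := by
      intro τ hτ
      have h1 : |pl τ - ρ τ * (lam σ / μ σ)| ≤ |pl τ| + |ρ τ * (lam σ / μ σ)| := by
        rw [sub_eq_add_neg]
        exact (abs_add_le _ _).trans (by rw [abs_neg])
      have h2 : |ρ τ * (lam σ / μ σ)| ≤ |ρ τ| * C := by
        rw [abs_mul]
        exact mul_le_mul_of_nonneg_left hσC (abs_nonneg _)
      calc |pl τ - ρ τ * (lam σ / μ σ)| ≤ |pl τ| + |ρ τ| * C := by linarith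
        _ = |pl τ| + C * |ρ τ| := by ring
    calc |pl σ - ρ σ * lam σ / μ σ|
        ≤ ∑ τ ∈ T σ, |pl τ - ρ τ * (lam σ / μ σ)| := by
          rw [hsplit]; exact Finset.abs_sum_le_sum_abs _ _
      _ = (∑ τ ∈ T σ ∩ Bad, |pl τ - ρ τ * (lam σ / μ σ)|)
          + (∑ τ ∈ T σ \ Bad, |pl τ - ρ τ * (lam σ / μ σ)|) :=
          (Finset.sum_inter_add_sum_sdiff _ _ _).symm
      _ ≤ (∑ τ ∈ T σ ∩ Bad, (|pl τ| + C * |ρ τ|))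
          + (∑ τ ∈ T σ \ Bad, |pl τ - ρ τ * (lam σ / μ σ)|) := by
          gcongr with τ hτ
          exact hbadterm τ hτ
      _ = _ := by ring
  -- the good part is strictly below 2B/E
  have hA : (∑ σ ∈ F, ∑ τ ∈ T σ \ Bad, |pl τ - ρ τ * (lam σ / μ σ)|)
      < 2 * Bbd / E := by
    by_cases hne : ∃ σ ∈ F, (T σ \ Bad).Nonempty
    · obtain ⟨σ0, hσ0, hne0⟩ := hne
      have hstep : (∑ σ ∈ F, ∑ τ ∈ T σ \ Bad, |pl τ - ρ τ * (lam σ / μ σ)|)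
          < ∑ σ ∈ F, ∑ τ ∈ T σ \ Bad, (|lam τ| + |ρ τ|) / E := by
        apply Finset.sum_lt_sum
        · intro σ hσ
          exact Finset.sum_le_sum fun τ hτ => (good_bound σ hσ τ hτ).le
        · exact ⟨σ0, hσ0, Finset.sum_lt_sum_of_nonempty hne0
            (fun τ hτ => good_bound σ0 hσ0 τ hτ)⟩
      have hstep2 : (∑ σ ∈ F, ∑ τ ∈ T σ \ Bad, (|lam τ| + |ρ τ|) / E)
          = ∑ τ ∈ F.biUnion (fun σ => T σ \ Bad), (|lam τ| + |ρ τ|) / E :=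
        (Finset.sum_biUnion (hTdisj _ (fun σ => Finset.sdiff_subset))).symm
      have hGsub : F.biUnion (fun σ => T σ \ Bad) ⊆ B' := by
        intro τ hτ
        obtain ⟨σ, hσ, hτ⟩ := Finset.mem_biUnion.mp hτ
        exact hTsub σ (Finset.mem_sdiff.mp hτ).1
      have hGpart : IsPartition (F.biUnion (fun σ => T σ \ Bad)) :=
        fun x hx y hy hxy => hB' x (hGsub hx) y (hGsub hy) hxy
      have hle : (∑ τ ∈ F.biUnion (fun σ => T σ \ Bad), (|lam τ| + |ρ τ|) / E)
          ≤ 2 * Bbd / E := by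
        have h1 := hlambd _ hGpart
        have h2 := hρbd _ hGpart
        rw [← Finset.sum_div, Finset.sum_add_distrib]
        rw [div_le_div_iff_of_pos_right hE] at *
        linarith
      rw [hstep2] at hstep
      exact hstep.trans_le hle
    · push_neg at hne
      have hz : ∀ σ ∈ F, (∑ τ ∈ T σ \ Bad, |pl τ - ρ τ * (lam σ / μ σ)|) = 0 := by
        intro σ hσ
        rw [hne σ hσ, Finset.sum_empty]
      rw [Finset.sum_eq_zero hz]
      positivity
  -- the bad part
  have hBd : (∑ σ ∈ F, ∑ τ ∈ T σ ∩ Bad, (|pl τ| + C * |ρ τ|))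
      ≤ C * (∑ τ ∈ Bad, |ρ τ|) + (∑ τ ∈ Bad, |pl τ|) := by
    rw [← Finset.sum_biUnion (hTdisj _ (fun σ => Finset.inter_subset_left))]
    have hsub : F.biUnion (fun σ => T σ ∩ Bad) ⊆ Bad := by
      intro τ hτ
      obtain ⟨σ, hσ, hτ⟩ := Finset.mem_biUnion.mp hτ
      exact (Finset.mem_inter.mp hτ).2
    calc (∑ τ ∈ F.biUnion (fun σ => T σ ∩ Bad), (|pl τ| + C * |ρ τ|))
        ≤ ∑ τ ∈ Bad, (|pl τ| + C * |ρ τ|) :=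
          Finset.sum_le_sum_of_subset_of_nonneg hsub (fun τ _ _ => by positivity)
      _ = C * (∑ τ ∈ Bad, |ρ τ|) + (∑ τ ∈ Bad, |pl τ|) := by
          rw [Finset.sum_add_distrib, Finset.mul_sum]
          ring
  calc (∑ σ ∈ F, |pl σ - ρ σ * lam σ / μ σ|)
      ≤ ∑ σ ∈ F, ((∑ τ ∈ T σ \ Bad, |pl τ - ρ τ * (lam σ / μ σ)|)
          + (∑ τ ∈ T σ ∩ Bad, (|pl τ| + C * |ρ τ|))) := Finset.sum_le_sum key
    _ = (∑ σ ∈ F, ∑ τ ∈ T σ \ Bad, |pl τ - ρ τ * (lam σ / μ σ)|)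
        + (∑ σ ∈ F, ∑ τ ∈ T σ ∩ Bad, (|pl τ| + C * |ρ τ|)) :=
        Finset.sum_add_distrib
    _ < 2 * Bbd / E + (C * (∑ τ ∈ Bad, |ρ τ|) + (∑ τ ∈ Bad, |pl τ|)) :=
        add_lt_add_of_lt_of_le hA hBd
    _ = _ := by ring
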